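/- For any x ∈ (-1,1), f_B(x) equals (2m+1)/2^B where m = ⌊x·2^{B-1}⌋ if this value lies in (-1,1); equivalently, f_B(x) is the unique odd multiple of 2^{-B} in the half-open interval of length 2^{1-B} containing x, i.e., f_B(x) - 2^{-B} ≤ x < f_B(x) + 2^{-B} when x ≥ f_B(x) - 2^{-B}. -/

import Mathlib

/-- Greedy sign-based binary quantization. -/
noncomputable def quant : ℕ → ℝ → ℝ
  | 0, _ => 0
  | (k + 1), x =>
      quant k x + (if 0 ≤ x - quant k x then (1 : ℝ) else -1) / 2 ^ (k + 1)

lemma quant_key (k : ℕ) (x : ℝ) (hx1 : -1 < x) (hx2 : x < 1) :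
    quant (k + 1) x = (2 * (⌊x * 2 ^ k⌋ : ℝ) + 1) / 2 ^ (k + 1) ∧
    quant (k + 1) x - 1 / 2 ^ (k + 1) ≤ x ∧ x < quant (k + 1) x + 1 / 2 ^ (k + 1) := by
  induction k with
  | zero =>
      simp only [quant, pow_one, pow_zero, mul_one, zero_add, sub_zero]
      by_cases h : 0 ≤ x
      · have hf : ⌊x⌋ = 0 := by
          rw [Int.floor_eq_iff]
          constructor <;> push_cast <;> linarith
        rw [hf, if_pos h]
        norm_num
        constructor <;> linarith
      · have hf : ⌊x⌋ = -1 := by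
          rw [Int.floor_eq_iff]
          constructor <;> push_cast <;> linarith
        rw [hf, if_neg h]
        norm_num
        constructor <;> linarith
  | succ k ih =>
      obtain ⟨heq, hlb, hub⟩ := ih
      set m : ℤ := ⌊x * 2 ^ k⌋ with hm
      set c : ℝ := 2 ^ (k + 1) with hcdef
      have hc : (0:ℝ) < c := by positivity
      have hc2 : (2:ℝ) ^ (k + 2) = 2 * c := by rw [hcdef]; ring
      -- translate hypotheses to cleared-denominator form
      have hA : (2 * (m:ℝ)) ≤ x * c := by
        have : (2 * (m:ℝ) + 1) / c - 1 / c ≤ x := by rw [← heq]; exact hlb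
        rw [div_sub_div_same, div_le_iff₀ hc] at this; linarith
      have hB : x * c < 2 * (m:ℝ) + 2 := by
        have : x < (2 * (m:ℝ) + 1) / c + 1 / c := by rw [← heq]; exact hub
        rw [← add_div, lt_div_iff₀ hc] at this; linarith
      have hq : quant (k + 2) x
          = quant (k+1) x + (if 0 ≤ x - quant (k+1) x then (1:ℝ) else -1) / 2 ^ (k + 2) := rfl
      by_cases h : 0 ≤ x - quant (k + 1) x
      · have hge : 2 * (m:ℝ) + 1 ≤ x * c := by
          rw [heq, sub_nonneg, div_le_iff₀ hc] at h; linarith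
        have hf : ⌊x * 2 ^ (k + 1)⌋ = 2 * m + 1 := by
          rw [Int.floor_eq_iff]
          constructor <;> push_cast <;> [linarith; linarith]
        have hval : quant (k + 2) x = (4 * (m:ℝ) + 3) / (2 * c) := by
          rw [hq, if_pos h, heq, hc2]
          field_simp; ring
        refine ⟨?_, ?_, ?_⟩
        · rw [hval, hf, hc2]; push_cast; ring_nf
        · rw [hval, hc2, div_sub_div_same, div_le_iff₀ (by linarith)]; linarith
        · rw [hval, hc2, ← add_div, lt_div_iff₀ (by linarith)]; linarith
      · push_neg at h
        have hlt : x * c < 2 * (m:ℝ) + 1 := by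
          rw [heq, sub_neg, lt_div_iff₀ hc] at h; linarith
        have hf : ⌊x * 2 ^ (k + 1)⌋ = 2 * m := by
          rw [Int.floor_eq_iff]
          constructor <;> push_cast <;> [linarith; linarith]
        have hval : quant (k + 2) x = (4 * (m:ℝ) + 1) / (2 * c) := by
          rw [hq, if_neg (not_le.mpr (by linarith)), heq, hc2]
          field_simp; ring
        refine ⟨?_, ?_, ?_⟩
        · rw [hval, hf, hc2]; push_cast; ring_nf
        · rw [hval, hc2, div_sub_div_same, div_le_iff₀ (by linarith)]; linarith
        · rw [hval, hc2, ← add_div, lt_div_iff₀ (by linarith)]; linarith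

/-- For x ∈ (-1,1) and B > 0, f_B(x) = (2m+1)/2^B with m = ⌊x·2^{B-1}⌋, and
f_B(x) is the odd multiple of 2^{-B} whose half-open interval of length
2^{1-B} contains x:  f_B(x) - 2^{-B} ≤ x < f_B(x) + 2^{-B}. -/
theorem stmt_12 (B : ℕ) (hB : 0 < B) (x : ℝ) (hx : x ∈ Set.Ioo (-1 : ℝ) 1) :
    quant B x = (2 * (⌊x * 2 ^ (B - 1)⌋ : ℝ) + 1) / 2 ^ B ∧
    quant B x - 1 / 2 ^ B ≤ x ∧ x < quant B x + 1 / 2 ^ B := by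
  obtain ⟨k, rfl⟩ := Nat.exists_eq_add_of_lt hB
  simp only [zero_add, Nat.add_sub_cancel]
  exact quant_key k x hx.1 hx.2
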